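/- Fix Θ ∈ (0, π). Then for all r₁, r₂ > 0: ∂ϑ₁/∂r₁ < 0, ∂ϑ₂/∂r₁ > 0, and ∂(ϑ₁ + ϑ₂)/∂r₁ < 0. -/

import Mathlib

/-- The inverse hyperbolic cosine: `arcosh x = log (x + √(x² − 1))` for `x ≥ 1`. -/
noncomputable def arcosh (x : ℝ) : ℝ := Real.log (x + Real.sqrt (x ^ 2 - 1))

/-- The hyperbolic distance between the centers of two hyperbolic disks of radii `r₁`, `r₂`
meeting at exterior intersection angle `Θ` (hyperbolic cosine law). -/
noncomputable def dist2 (Θ r₁ r₂ : ℝ) : ℝ :=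
  arcosh (Real.cosh r₁ * Real.cosh r₂ + Real.cos Θ * Real.sinh r₁ * Real.sinh r₂)

/-- The inner angle `ϑ₁` at the first center of the hyperbolic triangle with side
lengths `r₁`, `r₂`, `d` (hyperbolic law of cosines). -/
noncomputable def theta2₁ (Θ r₁ r₂ : ℝ) : ℝ :=
  Real.arccos ((Real.cosh r₁ * Real.cosh (dist2 Θ r₁ r₂) - Real.cosh r₂) /
    (Real.sinh r₁ * Real.sinh (dist2 Θ r₁ r₂)))

/-- The inner angle `ϑ₂` at the second center of the hyperbolic triangle with side
lengths `r₁`, `r₂`, `d` (hyperbolic law of cosines). -/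
noncomputable def theta2₂ (Θ r₁ r₂ : ℝ) : ℝ :=
  Real.arccos ((Real.cosh r₂ * Real.cosh (dist2 Θ r₁ r₂) - Real.cosh r₁) /
    (Real.sinh r₂ * Real.sinh (dist2 Θ r₁ r₂)))

open Real

lemma cosh_arcosh {x : ℝ} (hx : 1 < x) : Real.cosh (_root_.arcosh x) = x := by
  have hx0 : (0:ℝ) ≤ x ^ 2 - 1 := by nlinarith
  have hs : Real.sqrt (x ^ 2 - 1) ^ 2 = x ^ 2 - 1 := Real.sq_sqrt hx0
  have hsnn : 0 ≤ Real.sqrt (x ^ 2 - 1) := Real.sqrt_nonneg _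
  have hy : 0 < x + Real.sqrt (x ^ 2 - 1) := by nlinarith
  rw [_root_.arcosh, Real.cosh_eq, Real.exp_log hy, Real.exp_neg, Real.exp_log hy]
  rw [div_eq_iff (by norm_num : (2:ℝ) ≠ 0)]
  field_simp
  nlinarith [hs]

lemma sinh_arcosh {x : ℝ} (hx : 1 < x) : Real.sinh (_root_.arcosh x) = Real.sqrt (x ^ 2 - 1) := by
  have hx0 : (0:ℝ) ≤ x ^ 2 - 1 := by nlinarith
  have hs : Real.sqrt (x ^ 2 - 1) ^ 2 = x ^ 2 - 1 := Real.sq_sqrt hx0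
  have hsnn : 0 ≤ Real.sqrt (x ^ 2 - 1) := Real.sqrt_nonneg _
  have hy : 0 < x + Real.sqrt (x ^ 2 - 1) := by nlinarith
  rw [_root_.arcosh, Real.sinh_eq, Real.exp_log hy, Real.exp_neg, Real.exp_log hy]
  rw [div_eq_iff (by norm_num : (2:ℝ) ≠ 0)]
  field_simp
  nlinarith [hs]

lemma hC_gt (Θ : ℝ) (hΘ : Θ ∈ Set.Ioo 0 Real.pi) {t r₂ : ℝ} (ht : 0 < t) (hr₂ : 0 < r₂) :
    1 < Real.cosh t * Real.cosh r₂ + Real.cos Θ * Real.sinh t * Real.sinh r₂ := by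
  have hsin := Real.sin_pos_of_pos_of_lt_pi hΘ.1 hΘ.2
  have hc : -1 < Real.cos Θ := by nlinarith [Real.sin_sq_add_cos_sq Θ]
  have h1 : (1:ℝ) ≤ Real.cosh (t - r₂) := Real.one_le_cosh _
  rw [Real.cosh_sub] at h1
  have hst : 0 < Real.sinh t := Real.sinh_pos_iff.mpr ht
  have hsr : 0 < Real.sinh r₂ := Real.sinh_pos_iff.mpr hr₂
  have h2 : 0 < (Real.cos Θ + 1) * (Real.sinh t * Real.sinh r₂) :=
    mul_pos (by linarith) (mul_pos hst hsr)
  nlinarith [h2]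

lemma theta2₁_eq (Θ : ℝ) (hΘ : Θ ∈ Set.Ioo 0 Real.pi) {r₂ : ℝ} (hr₂ : 0 < r₂)
    {t : ℝ} (ht : 0 < t) :
    theta2₁ Θ t r₂ = Real.pi / 2 -
      Real.arctan ((Real.sinh t * Real.cosh r₂ + Real.cos Θ * Real.cosh t * Real.sinh r₂) /
        (Real.sin Θ * Real.sinh r₂)) := by
  have hsin := Real.sin_pos_of_pos_of_lt_pi hΘ.1 hΘ.2
  have hst : 0 < Real.sinh t := Real.sinh_pos_iff.mpr ht
  have hsr : 0 < Real.sinh r₂ := Real.sinh_pos_iff.mpr hr₂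
  set C := Real.cosh t * Real.cosh r₂ + Real.cos Θ * Real.sinh t * Real.sinh r₂ with hCdef
  have hC : 1 < C := hC_gt Θ hΘ ht hr₂
  set N := Real.sinh t * Real.cosh r₂ + Real.cos Θ * Real.cosh t * Real.sinh r₂ with hNdef
  set K := Real.sin Θ * Real.sinh r₂ with hKdef
  have hK : 0 < K := mul_pos hsin hsr
  have hid : K ^ 2 + N ^ 2 = C ^ 2 - 1 := by
    rw [hCdef, hNdef, hKdef]
    linear_combination (Real.cos Θ ^ 2 * Real.sinh r₂ ^ 2 - Real.cosh r₂ ^ 2) * Real.cosh_sq t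
      - Real.cosh_sq r₂ + Real.sinh r₂ ^ 2 * Real.sin_sq_add_cos_sq Θ
  have hE : 0 < C ^ 2 - 1 := by nlinarith
  have hcoshd : Real.cosh (dist2 Θ t r₂) = C := cosh_arcosh hC
  have hsinhd : Real.sinh (dist2 Θ t r₂) = Real.sqrt (C ^ 2 - 1) := sinh_arcosh hC
  have hsq : Real.sqrt (C ^ 2 - 1) = Real.sqrt (1 + (N / K) ^ 2) * K := by
    have hKN : (1 + (N / K) ^ 2) * K ^ 2 = K ^ 2 + N ^ 2 := by
      field_simp [hK.ne']
    rw [show C ^ 2 - 1 = (1 + (N / K) ^ 2) * K ^ 2 by rw [hKN]; exact hid.symm]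
    rw [Real.sqrt_mul (by positivity), Real.sqrt_sq hK.le]
  have hroot : 0 < Real.sqrt (1 + (N / K) ^ 2) := Real.sqrt_pos.mpr (by positivity)
  have harg : (Real.cosh t * Real.cosh (dist2 Θ t r₂) - Real.cosh r₂) /
      (Real.sinh t * Real.sinh (dist2 Θ t r₂)) = Real.cos (Real.pi / 2 - Real.arctan (N / K)) := by
    rw [Real.cos_pi_div_two_sub, Real.sin_arctan, hcoshd, hsinhd, hsq]
    have hnum : Real.cosh t * C - Real.cosh r₂ = Real.sinh t * N := by
      rw [hCdef, hNdef]; linear_combination Real.cosh r₂ * Real.cosh_sq t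
    rw [hnum]
    field_simp
  rw [theta2₁, harg, Real.arccos_cos]
  · linarith [Real.arctan_lt_pi_div_two (N / K)]
  · linarith [Real.neg_pi_div_two_lt_arctan (N / K), Real.pi_pos]

lemma theta2₂_eq (Θ : ℝ) (hΘ : Θ ∈ Set.Ioo 0 Real.pi) {r₂ : ℝ} (hr₂ : 0 < r₂)
    {t : ℝ} (ht : 0 < t) :
    theta2₂ Θ t r₂ = Real.pi / 2 -
      Real.arctan ((Real.cosh t * Real.sinh r₂ + Real.cos Θ * Real.cosh r₂ * Real.sinh t) /
        (Real.sin Θ * Real.sinh t)) := by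
  have hsin := Real.sin_pos_of_pos_of_lt_pi hΘ.1 hΘ.2
  have hst : 0 < Real.sinh t := Real.sinh_pos_iff.mpr ht
  have hsr : 0 < Real.sinh r₂ := Real.sinh_pos_iff.mpr hr₂
  set C := Real.cosh t * Real.cosh r₂ + Real.cos Θ * Real.sinh t * Real.sinh r₂ with hCdef
  have hC : 1 < C := hC_gt Θ hΘ ht hr₂
  set N := Real.cosh t * Real.sinh r₂ + Real.cos Θ * Real.cosh r₂ * Real.sinh t with hNdef
  set K := Real.sin Θ * Real.sinh t with hKdef
  have hK : 0 < K := mul_pos hsin hst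
  have hid : K ^ 2 + N ^ 2 = C ^ 2 - 1 := by
    rw [hCdef, hNdef, hKdef]
    linear_combination (Real.cos Θ ^ 2 * Real.sinh t ^ 2 - Real.cosh t ^ 2) * Real.cosh_sq r₂
      - Real.cosh_sq t + Real.sinh t ^ 2 * Real.sin_sq_add_cos_sq Θ
  have hE : 0 < C ^ 2 - 1 := by nlinarith
  have hcoshd : Real.cosh (dist2 Θ t r₂) = C := cosh_arcosh hC
  have hsinhd : Real.sinh (dist2 Θ t r₂) = Real.sqrt (C ^ 2 - 1) := sinh_arcosh hC
  have hsq : Real.sqrt (C ^ 2 - 1) = Real.sqrt (1 + (N / K) ^ 2) * K := by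
    have hKN : (1 + (N / K) ^ 2) * K ^ 2 = K ^ 2 + N ^ 2 := by
      field_simp [hK.ne']
    rw [show C ^ 2 - 1 = (1 + (N / K) ^ 2) * K ^ 2 by rw [hKN]; exact hid.symm]
    rw [Real.sqrt_mul (by positivity), Real.sqrt_sq hK.le]
  have hroot : 0 < Real.sqrt (1 + (N / K) ^ 2) := Real.sqrt_pos.mpr (by positivity)
  have harg : (Real.cosh r₂ * Real.cosh (dist2 Θ t r₂) - Real.cosh t) /
      (Real.sinh r₂ * Real.sinh (dist2 Θ t r₂)) = Real.cos (Real.pi / 2 - Real.arctan (N / K)) := by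
    rw [Real.cos_pi_div_two_sub, Real.sin_arctan, hcoshd, hsinhd, hsq]
    have hnum : Real.cosh r₂ * C - Real.cosh t = Real.sinh r₂ * N := by
      rw [hCdef, hNdef]; linear_combination Real.cosh t * Real.cosh_sq r₂
    rw [hnum]
    field_simp
  rw [theta2₂, harg, Real.arccos_cos]
  · linarith [Real.arctan_lt_pi_div_two (N / K)]
  · linarith [Real.neg_pi_div_two_lt_arctan (N / K), Real.pi_pos]

set_option maxHeartbeats 1000000 in
theorem two_circle_angle_derivative_signs
    (Θ : ℝ) (hΘ : Θ ∈ Set.Ioo 0 Real.pi)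
    (r₁ r₂ : ℝ) (hr₁ : 0 < r₁) (hr₂ : 0 < r₂) :
    deriv (fun t => theta2₁ Θ t r₂) r₁ < 0 ∧
    0 < deriv (fun t => theta2₂ Θ t r₂) r₁ ∧
    deriv (fun t => theta2₁ Θ t r₂ + theta2₂ Θ t r₂) r₁ < 0 := by
  have hsin := Real.sin_pos_of_pos_of_lt_pi hΘ.1 hΘ.2
  have hst : 0 < Real.sinh r₁ := Real.sinh_pos_iff.mpr hr₁
  have hsr : 0 < Real.sinh r₂ := Real.sinh_pos_iff.mpr hr₂
  have hch1 : 0 < Real.cosh r₁ := Real.cosh_pos r₁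
  have hch2 : 0 < Real.cosh r₂ := Real.cosh_pos r₂
  set C := Real.cosh r₁ * Real.cosh r₂ + Real.cos Θ * Real.sinh r₁ * Real.sinh r₂ with hCdef
  have hC : 1 < C := hC_gt Θ hΘ hr₁ hr₂
  set N := Real.sinh r₁ * Real.cosh r₂ + Real.cos Θ * Real.cosh r₁ * Real.sinh r₂ with hNdef
  set M := Real.cosh r₁ * Real.sinh r₂ + Real.cos Θ * Real.cosh r₂ * Real.sinh r₁ with hMdef
  set K := Real.sin Θ * Real.sinh r₂ with hKdef
  set S := Real.sin Θ * Real.sinh r₁ with hSdef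
  have hK : 0 < K := mul_pos hsin hsr
  have hS : 0 < S := mul_pos hsin hst
  have hidN : K ^ 2 + N ^ 2 = C ^ 2 - 1 := by
    rw [hCdef, hNdef, hKdef]
    linear_combination (Real.cos Θ ^ 2 * Real.sinh r₂ ^ 2 - Real.cosh r₂ ^ 2) * Real.cosh_sq r₁
      - Real.cosh_sq r₂ + Real.sinh r₂ ^ 2 * Real.sin_sq_add_cos_sq Θ
  have hidM : S ^ 2 + M ^ 2 = C ^ 2 - 1 := by
    rw [hCdef, hMdef, hSdef]
    linear_combination (Real.cos Θ ^ 2 * Real.sinh r₁ ^ 2 - Real.cosh r₁ ^ 2) * Real.cosh_sq r₂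
      - Real.cosh_sq r₁ + Real.sinh r₁ ^ 2 * Real.sin_sq_add_cos_sq Θ
  have hE : 0 < C ^ 2 - 1 := by nlinarith
  have hmem : Set.Ioi (0:ℝ) ∈ nhds r₁ := Ioi_mem_nhds hr₁
  -- the first function
  have hev₁ : (fun t => theta2₁ Θ t r₂) =ᶠ[nhds r₁]
      (fun t => Real.pi / 2 - Real.arctan ((Real.sinh t * Real.cosh r₂ +
        Real.cos Θ * Real.cosh t * Real.sinh r₂) / K)) := by
    filter_upwards [hmem] with t ht
    exact theta2₁_eq Θ hΘ hr₂ ht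
  have hev₂ : (fun t => theta2₂ Θ t r₂) =ᶠ[nhds r₁]
      (fun t => Real.pi / 2 - Real.arctan ((Real.cosh t * Real.sinh r₂ +
        Real.cos Θ * Real.cosh r₂ * Real.sinh t) / (Real.sin Θ * Real.sinh t))) := by
    filter_upwards [hmem] with t ht
    exact theta2₂_eq Θ hΘ hr₂ ht
  -- derivative of the first inner function
  have hN : HasDerivAt (fun t => (Real.sinh t * Real.cosh r₂ +
      Real.cos Θ * Real.cosh t * Real.sinh r₂) / K) (C / K) r₁ := by
    have h1 : HasDerivAt (fun t => Real.sinh t * Real.cosh r₂ +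
        Real.cos Θ * Real.cosh t * Real.sinh r₂) C r₁ := by
      have := (((Real.hasDerivAt_sinh r₁).mul_const (Real.cosh r₂)).add
        ((((Real.hasDerivAt_cosh r₁)).const_mul (Real.cos Θ)).mul_const (Real.sinh r₂)))
      exact this
    exact h1.div_const K
  have hg₁ : HasDerivAt (fun t => Real.pi / 2 - Real.arctan ((Real.sinh t * Real.cosh r₂ +
      Real.cos Θ * Real.cosh t * Real.sinh r₂) / K))
      (-(1 / (1 + (N / K) ^ 2) * (C / K))) r₁ := by
    have := (hN.arctan).const_sub (Real.pi / 2)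
    simpa [hNdef] using this
  -- derivative of the second inner function
  have hMd : HasDerivAt (fun t => Real.cosh t * Real.sinh r₂ +
      Real.cos Θ * Real.cosh r₂ * Real.sinh t)
      (Real.sinh r₁ * Real.sinh r₂ + Real.cos Θ * Real.cosh r₂ * Real.cosh r₁) r₁ :=
    ((Real.hasDerivAt_cosh r₁).mul_const (Real.sinh r₂)).add
      ((Real.hasDerivAt_sinh r₁).const_mul (Real.cos Θ * Real.cosh r₂))
  have hSd : HasDerivAt (fun t => Real.sin Θ * Real.sinh t) (Real.sin Θ * Real.cosh r₁) r₁ :=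
    (Real.hasDerivAt_sinh r₁).const_mul (Real.sin Θ)
  have hq : HasDerivAt (fun t => (Real.cosh t * Real.sinh r₂ +
      Real.cos Θ * Real.cosh r₂ * Real.sinh t) / (Real.sin Θ * Real.sinh t))
      (((Real.sinh r₁ * Real.sinh r₂ + Real.cos Θ * Real.cosh r₂ * Real.cosh r₁) *
        (Real.sin Θ * Real.sinh r₁) - M * (Real.sin Θ * Real.cosh r₁)) /
        (Real.sin Θ * Real.sinh r₁) ^ 2) r₁ := by
    have := hMd.div hSd (by positivity)
    exact this
  have hQval : ((Real.sinh r₁ * Real.sinh r₂ + Real.cos Θ * Real.cosh r₂ * Real.cosh r₁) *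
      (Real.sin Θ * Real.sinh r₁) - M * (Real.sin Θ * Real.cosh r₁)) /
      (Real.sin Θ * Real.sinh r₁) ^ 2 = -K / S ^ 2 := by
    rw [hSdef]
    congr 1
    rw [hMdef, hKdef]
    linear_combination (- Real.sin Θ * Real.sinh r₂) * Real.cosh_sq r₁
  have hg₂ : HasDerivAt (fun t => Real.pi / 2 - Real.arctan ((Real.cosh t * Real.sinh r₂ +
      Real.cos Θ * Real.cosh r₂ * Real.sinh t) / (Real.sin Θ * Real.sinh t)))
      (-(1 / (1 + (M / S) ^ 2) * (-K / S ^ 2))) r₁ := by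
    rw [← hQval]
    have := (hq.arctan).const_sub (Real.pi / 2)
    simpa [hMdef, hSdef] using this
  -- closed forms of the derivatives
  have h1d : (1 + (N / K) ^ 2) = (C ^ 2 - 1) / K ^ 2 := by
    field_simp; linear_combination hidN
  have h2d : (1 + (M / S) ^ 2) = (C ^ 2 - 1) / S ^ 2 := by
    field_simp; linear_combination hidM
  have hd₁ : -(1 / (1 + (N / K) ^ 2) * (C / K)) = -(C * K) / (C ^ 2 - 1) := by
    rw [h1d]; field_simp
  have hd₂ : -(1 / (1 + (M / S) ^ 2) * (-K / S ^ 2)) = K / (C ^ 2 - 1) := by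
    rw [h2d]; field_simp
  -- conclude
  have hD₁ : deriv (fun t => theta2₁ Θ t r₂) r₁ = -(C * K) / (C ^ 2 - 1) := by
    rw [hev₁.deriv_eq, hg₁.deriv, hd₁]
  have hD₂ : deriv (fun t => theta2₂ Θ t r₂) r₁ = K / (C ^ 2 - 1) := by
    rw [hev₂.deriv_eq, hg₂.deriv, hd₂]
  have hD₃ : deriv (fun t => theta2₁ Θ t r₂ + theta2₂ Θ t r₂) r₁ =
      -(C * K) / (C ^ 2 - 1) + K / (C ^ 2 - 1) := by
    have hev₃ := hev₁.add hev₂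
    rw [show (fun t => theta2₁ Θ t r₂ + theta2₂ Θ t r₂) = (fun t => theta2₁ Θ t r₂) + (fun t => theta2₂ Θ t r₂) from rfl, hev₃.deriv_eq, ← hd₁, ← hd₂]
    exact (hg₁.add hg₂).deriv
  refine ⟨?_, ?_, ?_⟩
  · rw [hD₁]
    apply div_neg_of_neg_of_pos _ hE
    nlinarith
  · rw [hD₂]
    positivity
  · rw [hD₃]
    rw [← add_div]
    apply div_neg_of_neg_of_pos _ hE
    have h : -(C * K) + K = -(K * (C - 1)) := by ring
    rw [h]
    exact neg_lt_zero.mpr (mul_pos hK (by linarith))
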